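/- Let (X, P) solve the extremal system on a bang arc (u constantly +1 or −1) with the normal Pontryagin Hamiltonian identically zero, and let t0 be a time at which Φ(t0) = 0, x1(t0) = 0, and x2(t0) ≠ 0. Then p1(t0) = 0, Φ̇(t0) = 0, Φ̈(t0) = 0, and Φ⁽³⁾(t0) = Δ² x2(t0) x3(t0). Consequently, also at points with x1 = 0, switchings on the set {x2 x3 > 0} can only occur from −1 to +1 and switchings on {x2 x3 < 0} only from +1 to −1. -/

import Mathlib

open Set

/-- On a bang arc (control constantly c = ±1) with vanishing normal
Pontryagin Hamiltonian, at a time t0 with Φ(t0) = 0, x1(t0) = 0 and x2(t0) ≠ 0 one has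
p1(t0) = 0, Φ̇(t0) = 0, Φ̈(t0) = 0, and Φ⁽³⁾(t0) = Δ² x2(t0) x3(t0).  Consequently,
also at points with x1 = 0, switchings on {x2 x3 > 0} can only be from −1 to +1 and on
{x2 x3 < 0} only from +1 to −1. -/
theorem third_order_switching_direction
    (Δ : ℝ) (hΔ : Δ ≠ 0) (a b : ℝ) (hab : a < b)
    (c : ℝ) (hc : c = 1 ∨ c = -1)
    (x1 x2 x3 p1 p2 p3 : ℝ → ℝ)
    (hx1 : ∀ t ∈ Ioo a b, HasDerivAt x1 (-Δ * x2 t) t)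
    (hx2 : ∀ t ∈ Ioo a b, HasDerivAt x2 (Δ * x1 t - c * x3 t) t)
    (hx3 : ∀ t ∈ Ioo a b, HasDerivAt x3 (c * x2 t) t)
    (hp1 : ∀ t ∈ Ioo a b, HasDerivAt p1 (-Δ * p2 t + x1 t) t)
    (hp2 : ∀ t ∈ Ioo a b, HasDerivAt p2 (Δ * p1 t - c * p3 t) t)
    (hp3 : ∀ t ∈ Ioo a b, HasDerivAt p3 (c * p2 t) t)
    (hH : ∀ t ∈ Ioo a b,
      Δ * (x1 t * p2 t - x2 t * p1 t) + c * (p3 t * x2 t - p2 t * x3 t)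
        - x1 t ^ 2 / 2 = 0)
    (t0 : ℝ) (ht0 : t0 ∈ Ioo a b)
    (hΦ : p3 t0 * x2 t0 - p2 t0 * x3 t0 = 0)
    (hx1t0 : x1 t0 = 0) (hx2t0 : x2 t0 ≠ 0) :
    p1 t0 = 0 ∧
    ∃ Φ1 Φ2 Φ3 : ℝ → ℝ,
      (∀ t ∈ Ioo a b,
        HasDerivAt (fun s => p3 s * x2 s - p2 s * x3 s) (Φ1 t) t) ∧
      (∀ t ∈ Ioo a b, HasDerivAt Φ1 (Φ2 t) t) ∧
      (∀ t ∈ Ioo a b, HasDerivAt Φ2 (Φ3 t) t) ∧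
      Φ1 t0 = 0 ∧ Φ2 t0 = 0 ∧ Φ3 t0 = Δ ^ 2 * x2 t0 * x3 t0 ∧
      (x2 t0 * x3 t0 > 0 → Φ3 t0 > 0) ∧
      (x2 t0 * x3 t0 < 0 → Φ3 t0 < 0) := by
  have hp1t0 : p1 t0 = 0 := by
    have h := hH t0 ht0
    rw [hx1t0, hΦ] at h
    have : Δ * (x2 t0 * p1 t0) = 0 := by linarith [h]
    rcases mul_eq_zero.1 this with h' | h'
    · exact absurd h' hΔ
    · rcases mul_eq_zero.1 h' with h'' | h''
      · exact absurd h'' hx2t0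
      · exact h''
  refine ⟨hp1t0,
    fun t => Δ * (p3 t * x1 t - p1 t * x3 t),
    fun t => Δ * (c * (p2 t * x1 t - p1 t * x2 t)
      - Δ * (p3 t * x2 t - p2 t * x3 t) - x1 t * x3 t),
    fun t => Δ * (c * ((Δ * p1 t - c * p3 t) * x1 t + p2 t * (-Δ * x2 t)
        - ((-Δ * p2 t + x1 t) * x2 t + p1 t * (Δ * x1 t - c * x3 t)))
      - Δ * (Δ * (p3 t * x1 t - p1 t * x3 t))
      - ((-Δ * x2 t) * x3 t + x1 t * (c * x2 t))),
    ?_, ?_, ?_, ?_, ?_, ?_, ?_, ?_⟩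
  · intro t ht
    have h := ((hp3 t ht).mul (hx2 t ht)).sub ((hp2 t ht).mul (hx3 t ht))
    exact h.congr_deriv (by ring)
  · intro t ht
    have h := (((hp3 t ht).mul (hx1 t ht)).sub
      ((hp1 t ht).mul (hx3 t ht))).const_mul Δ
    exact h.congr_deriv (by ring)
  · intro t ht
    have h := ((((hp2 t ht).mul (hx1 t ht)).sub
        ((hp1 t ht).mul (hx2 t ht))).const_mul c |>.sub
      ((((hp3 t ht).mul (hx2 t ht)).sub
        ((hp2 t ht).mul (hx3 t ht))).const_mul Δ) |>.sub
      ((hx1 t ht).mul (hx3 t ht))).const_mul Δ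
    exact h.congr_deriv (by ring)
  · simp only [hx1t0, hp1t0]; ring
  · simp only [hx1t0, hp1t0, hΦ]; ring
  · simp only [hx1t0, hp1t0]; ring
  · intro h
    simp only [hx1t0, hp1t0]
    nlinarith [pow_pos (abs_pos.2 hΔ) 2, sq_abs Δ]
  · intro h
    simp only [hx1t0, hp1t0]
    nlinarith [pow_pos (abs_pos.2 hΔ) 2, sq_abs Δ]
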